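/- Let G be a finite abelian group and G₀ ⊆ G a subset. If G₀ is an LCN-set with Δ(G₀) ≠ ∅, then min Δ(G₀) ≤ |G₀| − 2. -/

import Mathlib

/- Common definitions for zero-sum theory over a finite abelian group. -/

variable {G : Type*} [AddCommGroup G]

/-- `S` is a zero-sum sequence over the subset `G₀`:
a finite multiset of elements of `G₀` whose sum is `0`. -/
def IsZeroSumSeq (G₀ : Set G) (S : Multiset G) : Prop :=
  (∀ g ∈ S, g ∈ G₀) ∧ S.sum = 0

/-- `A` is an atom (minimal zero-sum sequence) over `G₀`: a nonempty zero-sum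
sequence over `G₀` that cannot be written as the union of two nonempty
zero-sum sequences, i.e. has no proper nonempty zero-sum subsequence. -/
def IsAtomOver (G₀ : Set G) (A : Multiset G) : Prop :=
  IsZeroSumSeq G₀ A ∧ A ≠ 0 ∧
    ∀ B : Multiset G, B ≤ A → B ≠ 0 → B ≠ A → B.sum ≠ 0

/-- The set of lengths `L(B)` of a zero-sum sequence `B` over `G₀`: all `k`
such that `B` is a union of `k` atoms over `G₀`. -/
def lengthSet (G₀ : Set G) (B : Multiset G) : Set ℕ :=
  { k | ∃ f : Multiset (Multiset G), f.card = k ∧ (∀ A ∈ f, IsAtomOver G₀ A) ∧ f.sum = B }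

/-- The set of successive distances `Δ(L)` of a set `L ⊆ ℕ`. -/
def distSet (L : Set ℕ) : Set ℕ :=
  { d | ∃ a ∈ L, ∃ b ∈ L, a < b ∧ b - a = d ∧ ∀ c ∈ L, a < c → c < b → False }

/-- The set of distances `Δ(G₀)`: union of `Δ(L(B))` over all nonempty
zero-sum sequences `B` over `G₀`. -/
def DeltaOf (G₀ : Set G) : Set ℕ :=
  ⋃ B : Multiset G, ⋃ (_ : B ≠ 0), distSet (lengthSet G₀ B)

/-- The set of minimal distances `Δ*(G) = { min Δ(G₀) : G₀ ⊆ G, Δ(G₀) ≠ ∅ }`. -/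
def DeltaStar (G : Type*) [AddCommGroup G] : Set ℕ :=
  { d | ∃ G₀ : Set G, (DeltaOf G₀).Nonempty ∧ sInf (DeltaOf G₀) = d }

/-- The cross number `k(S) = Σ_{g ∈ S} 1/ord(g)` (with multiplicity). -/
noncomputable def crossNumber (S : Multiset G) : ℚ :=
  (S.map fun g => ((addOrderOf g : ℚ))⁻¹).sum

/-- `G₀` is an LCN-set: every atom over `G₀` has cross number at least `1`. -/
def IsLCNSet (G₀ : Set G) : Prop :=
  ∀ A : Multiset G, IsAtomOver G₀ A → 1 ≤ crossNumber A

/-- `r` is the rank of the finite abelian group `G`: the number of summands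
in the invariant factor decomposition `G ≅ C_{n₁} ⊕ ... ⊕ C_{n_r}` with
`1 < n₁ ∣ n₂ ∣ ... ∣ n_r`. -/
def IsRank (G : Type*) [AddCommGroup G] (r : ℕ) : Prop :=
  ∃ d : Fin r → ℕ, (∀ i, 1 < d i) ∧ (∀ i j, i ≤ j → d i ∣ d j) ∧
    Nonempty (G ≃+ ((i : Fin r) → ZMod (d i)))

/-- The system of sets of lengths `𝓛(G) = { L(B) : B ∈ 𝓑(G) nonempty }`. -/
def LSystem (G : Type*) [AddCommGroup G] : Set (Set ℕ) :=
  { L | ∃ B : Multiset G, B ≠ 0 ∧ IsZeroSumSeq (Set.univ : Set G) B ∧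
      lengthSet (Set.univ : Set G) B = L }

/-- `d` is the greatest common divisor of the set `S ⊆ ℕ`. -/
def IsSetGcd (S : Set ℕ) (d : ℕ) : Prop :=
  (∀ s ∈ S, d ∣ s) ∧ ∀ e : ℕ, (∀ s ∈ S, e ∣ s) → e ∣ d

namespace ZSAux

open Multiset

variable {G : Type*} [AddCommGroup G]

lemma crossNumber_add (S T : Multiset G) :
    crossNumber (S + T) = crossNumber S + crossNumber T := by
  simp [crossNumber]

lemma crossNumber_replicate (n : ℕ) (g : G) :
    crossNumber (Multiset.replicate n g) = (n : ℚ) * ((addOrderOf g : ℚ))⁻¹ := by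
  simp [crossNumber, Multiset.map_replicate, Multiset.sum_replicate, nsmul_eq_mul]

lemma crossNumber_msum (f : Multiset (Multiset G)) :
    crossNumber f.sum = (f.map crossNumber).sum := by
  induction f using Multiset.induction with
  | empty => simp [crossNumber]
  | cons a s ih => simp [crossNumber_add, ih]

lemma crossNumber_finsetSum {ι : Type*} (s : Finset ι) (F : ι → Multiset G) :
    crossNumber (∑ i ∈ s, F i) = ∑ i ∈ s, crossNumber (F i) := by
  induction s using Finset.cons_induction with
  | empty => simp [crossNumber]
  | cons a t ha ih => simp [Finset.sum_cons, crossNumber_add, ih]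

lemma sum_finsetSum {ι : Type*} (s : Finset ι) (F : ι → Multiset G) :
    (∑ i ∈ s, F i).sum = ∑ i ∈ s, (F i).sum := by
  induction s using Finset.cons_induction with
  | empty => simp
  | cons a t ha ih => simp [Finset.sum_cons, ih]

lemma isAtom_replicate_order [Fintype G] {G₀ : Set G} {g : G} (hg : g ∈ G₀) :
    IsAtomOver G₀ (Multiset.replicate (addOrderOf g) g) := by
  have hpos : 0 < addOrderOf g := addOrderOf_pos g
  refine ⟨⟨?_, ?_⟩, ?_, ?_⟩
  · intro x hx; rw [Multiset.eq_of_mem_replicate hx]; exact hg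
  · simp [Multiset.sum_replicate, addOrderOf_nsmul_eq_zero]
  · intro h
    have hcc := congrArg Multiset.card h
    simp only [Multiset.card_replicate, Multiset.card_zero] at hcc
    omega
  · intro B hB hB0 hBA hsum
    obtain ⟨k, hk, rfl⟩ := Multiset.le_replicate_iff.mp hB
    rw [Multiset.sum_replicate] at hsum
    have hdvd : addOrderOf g ∣ k := addOrderOf_dvd_iff_nsmul_eq_zero.mpr hsum
    have hk0 : k ≠ 0 := fun h => hB0 (by simp [h])
    have : addOrderOf g ≤ k := Nat.le_of_dvd (Nat.pos_of_ne_zero hk0) hdvd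
    exact hBA (by rw [Nat.le_antisymm hk this])

lemma exists_factorization [DecidableEq G] {G₀ : Set G} :
    ∀ n (S : Multiset G), S.card = n → IsZeroSumSeq G₀ S → S ≠ 0 →
    ∃ f : Multiset (Multiset G), (∀ A ∈ f, IsAtomOver G₀ A) ∧ f.sum = S ∧ f ≠ 0 := by
  intro n
  induction n using Nat.strong_induction_on with
  | _ n ih =>
    intro S hcard hS hS0
    by_cases hA : IsAtomOver G₀ S
    · exact ⟨{S}, by simpa using hA, by simp, by simp⟩
    · rw [IsAtomOver] at hA
      push_neg at hA
      obtain ⟨B, hBle, hB0, hBS, hBsum⟩ := hA hS hS0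
      have hBS' : B < S := lt_of_le_of_ne hBle hBS
      have hcardB : B.card < n := hcard ▸ Multiset.card_lt_card hBS'
      have hsub : (S - B) + B = S := tsub_add_cancel_of_le hBle
      have hSB0 : S - B ≠ 0 := by
        intro h; rw [h, zero_add] at hsub; exact hBS hsub
      have hBzs : IsZeroSumSeq G₀ B :=
        ⟨fun g hgm => hS.1 g (Multiset.mem_of_le hBle hgm), hBsum⟩
      have hSBzs : IsZeroSumSeq G₀ (S - B) := by
        refine ⟨fun g hgm => hS.1 g (Multiset.mem_of_le (Multiset.sub_le_self S B) hgm), ?_⟩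
        have := congrArg Multiset.sum hsub
        rw [Multiset.sum_add, hBsum, add_zero] at this
        rw [this, hS.2]
      have hcardSB : (S - B).card < n := by
        have := congrArg Multiset.card hsub
        rw [Multiset.card_add, hcard] at this
        have hB0' : 0 < B.card := Multiset.card_pos.mpr hB0
        omega
      obtain ⟨f₁, hf₁, hf₁s, hf₁0⟩ := ih B.card hcardB B rfl hBzs hB0
      obtain ⟨f₂, hf₂, hf₂s, hf₂0⟩ := ih (S - B).card hcardSB (S - B) rfl hSBzs hSB0
      refine ⟨f₁ + f₂, ?_, ?_, ?_⟩
      · intro A hAm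
        rcases Multiset.mem_add.mp hAm with h | h
        · exact hf₁ A h
        · exact hf₂ A h
      · rw [Multiset.sum_add, hf₁s, hf₂s, add_comm, hsub]
      · intro h
        have hcc := congrArg Multiset.card h
        rw [Multiset.card_add, Multiset.card_zero] at hcc
        have := Multiset.card_pos.mpr hf₁0
        omega

lemma card_le_crossNumber {G₀ : Set G} (hLCN : IsLCNSet G₀)
    {f : Multiset (Multiset G)} (hf : ∀ A ∈ f, IsAtomOver G₀ A) :
    (f.card : ℚ) ≤ crossNumber f.sum := by
  rw [crossNumber_msum]
  have h1 : ∀ x ∈ f.map crossNumber, (1 : ℚ) ≤ x := by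
    intro x hx
    obtain ⟨A, hA, rfl⟩ := Multiset.mem_map.mp hx
    exact hLCN A (hf A hA)
  have := Multiset.card_nsmul_le_sum h1
  simpa [nsmul_eq_mul] using this

lemma count_lt_of_atom [Fintype G] [DecidableEq G] {G₀ : Set G} {U : Multiset G} (hU : IsAtomOver G₀ U)
    (hk : 1 < crossNumber U) {g : G} (hg : g ∈ U) : U.count g < addOrderOf g := by
  by_contra h
  push_neg at h
  have hle : Multiset.replicate (addOrderOf g) g ≤ U := by
    rw [Multiset.le_iff_count]
    intro a
    rcases eq_or_ne a g with rfl | hne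
    · simpa [Multiset.count_replicate] using h
    · simp [Multiset.count_replicate, hne, Ne.symm hne]
  have hpos : 0 < addOrderOf g := addOrderOf_pos g
  have h0 : Multiset.replicate (addOrderOf g) g ≠ 0 := by
    intro hh
    have hcc := congrArg Multiset.card hh
    simp only [Multiset.card_replicate, Multiset.card_zero] at hcc
    omega
  have hsum : (Multiset.replicate (addOrderOf g) g).sum = 0 := by
    simp [Multiset.sum_replicate, addOrderOf_nsmul_eq_zero]
  have hne : Multiset.replicate (addOrderOf g) g ≠ U := by
    intro hEq
    rw [← hEq, crossNumber_replicate] at hk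
    rw [mul_inv_cancel₀ (by exact_mod_cast hpos.ne')] at hk
    exact lt_irrefl _ hk
  exact hU.2.2 _ hle h0 hne hsum

lemma exists_gap {L : Set ℕ} : ∀ m (a b : ℕ), b - a ≤ m → a ∈ L → b ∈ L → a < b →
    ∃ d ∈ distSet L, d ≤ b - a := by
  intro m
  induction m with
  | zero => intro a b h _ _ hab; omega
  | succ m ih =>
    intro a b hm ha hb hab
    by_cases h : ∃ c ∈ L, a < c ∧ c < b
    · obtain ⟨c, hc, hac, hcb⟩ := h
      obtain ⟨d, hd, hdle⟩ := ih a c (by omega) ha hc hac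
      exact ⟨d, hd, by omega⟩
    · push_neg at h
      exact ⟨b - a, ⟨a, ha, b, hb, hab, rfl, fun c hc h1 h2 => (not_lt.mpr (h c hc h1)) h2⟩, le_refl _⟩

end ZSAux


theorem minDelta_le_card_sub_two_of_LCN
    (G : Type*) [AddCommGroup G] [Fintype G] (G₀ : Set G)
    (hLCN : IsLCNSet G₀) (hne : (DeltaOf G₀).Nonempty) :
    sInf (DeltaOf G₀) ≤ G₀.ncard - 2 := by
  classical
  obtain ⟨d₀, hd₀⟩ := hne
  rw [DeltaOf] at hd₀
  simp only [Set.mem_iUnion] at hd₀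
  obtain ⟨B, hB0, hd₀⟩ := hd₀
  obtain ⟨a, ha, b, hb, hab, -, -⟩ := hd₀
  obtain ⟨f, hfcard, hf, hfsum⟩ := ha
  obtain ⟨f', hf'card, hf', hf'sum⟩ := hb
  -- there is an atom with cross number > 1
  have hex : ∃ U ∈ f, 1 < crossNumber U := by
    by_contra hc
    push_neg at hc
    have h1 : crossNumber B ≤ (f.card : ℚ) := by
      rw [← hfsum, ZSAux.crossNumber_msum]
      have hle : ∀ x ∈ f.map crossNumber, x ≤ (1 : ℚ) := by
        intro x hx
        obtain ⟨A, hA, rfl⟩ := Multiset.mem_map.mp hx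
        exact hc A hA
      have := Multiset.sum_le_card_nsmul (f.map crossNumber) 1 hle
      simpa [nsmul_eq_mul] using this
    have h2 : (f'.card : ℚ) ≤ crossNumber B := by
      rw [← hf'sum]; exact ZSAux.card_le_crossNumber hLCN hf'
    rw [hfcard] at h1; rw [hf'card] at h2
    have hba : (b : ℚ) ≤ (a : ℚ) := h2.trans h1
    exact absurd (by exact_mod_cast hba : b ≤ a) (not_le.mpr hab)
  obtain ⟨U, hUf, hkU⟩ := hex
  have hU : IsAtomOver G₀ U := hf U hUf
  set s := U.toFinset.card with hs
  have hUdec : ∑ g ∈ U.toFinset, Multiset.replicate (U.count g) g = U := by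
    have := Multiset.toFinset_sum_count_nsmul_eq U
    simpa [Multiset.nsmul_singleton] using this
  have hcount : ∀ g ∈ U.toFinset, U.count g < addOrderOf g := fun g hg =>
    ZSAux.count_lt_of_atom hU hkU (Multiset.mem_toFinset.mp hg)
  set C : Multiset G := ∑ g ∈ U.toFinset, Multiset.replicate (addOrderOf g - U.count g) g
    with hC
  set B' : Multiset G := ∑ g ∈ U.toFinset, Multiset.replicate (addOrderOf g) g with hB'
  have hsplit : B' = U + C := by
    conv_rhs => rw [← hUdec]
    rw [hB', hC, ← Finset.sum_add_distrib]
    refine Finset.sum_congr rfl fun g hg => ?_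
    rw [← Multiset.replicate_add]
    congr 1
    have := hcount g hg; omega
  have hordpos : ∀ g : G, (0 : ℚ) < (addOrderOf g : ℚ) := fun g => by
    exact_mod_cast addOrderOf_pos g
  have hkUval : crossNumber U
      = ∑ g ∈ U.toFinset, (U.count g : ℚ) * ((addOrderOf g : ℚ))⁻¹ := by
    rw [crossNumber, Finset.sum_multiset_map_count]
    exact Finset.sum_congr rfl fun g _ => by rw [nsmul_eq_mul]
  have hkC : crossNumber C = (s : ℚ) - crossNumber U := by
    rw [hC, ZSAux.crossNumber_finsetSum]
    have hterm : ∀ g ∈ U.toFinset,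
        crossNumber (Multiset.replicate (addOrderOf g - U.count g) g)
          = 1 - (U.count g : ℚ) * ((addOrderOf g : ℚ))⁻¹ := by
      intro g hg
      rw [ZSAux.crossNumber_replicate]
      have hlt := hcount g hg
      have hne0 : ((addOrderOf g : ℚ)) ≠ 0 := (hordpos g).ne'
      rw [Nat.cast_sub hlt.le, sub_mul, mul_inv_cancel₀ hne0]
    rw [Finset.sum_congr rfl hterm, Finset.sum_sub_distrib, hkUval]
    simp [hs]
  have hUne : U.toFinset.Nonempty := by
    obtain ⟨g, hg⟩ := Multiset.exists_mem_of_ne_zero hU.2.1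
    exact ⟨g, Multiset.mem_toFinset.mpr hg⟩
  have hkUs : crossNumber U < (s : ℚ) := by
    rw [hkUval]
    have : ∑ g ∈ U.toFinset, (U.count g : ℚ) * ((addOrderOf g : ℚ))⁻¹
        < ∑ _g ∈ U.toFinset, (1 : ℚ) := by
      refine Finset.sum_lt_sum_of_nonempty hUne fun g hg => ?_
      rw [← div_eq_mul_inv, div_lt_one (hordpos g)]
      exact_mod_cast hcount g hg
    simpa [hs] using this
  -- B' is a zero-sum sequence
  have hB'sum : B'.sum = 0 := by
    rw [hB', ZSAux.sum_finsetSum]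
    refine Finset.sum_eq_zero fun g _ => ?_
    rw [Multiset.sum_replicate]
    exact addOrderOf_nsmul_eq_zero g
  have hCsum : C.sum = 0 := by
    have h := congrArg Multiset.sum hsplit
    rw [hB'sum, Multiset.sum_add, hU.1.2, zero_add] at h
    exact h.symm
  have hCmem : ∀ g ∈ C, g ∈ G₀ := by
    intro g hg
    rw [hC] at hg
    obtain ⟨i, hi, hgi⟩ := Multiset.mem_sum.mp hg
    rw [Multiset.eq_of_mem_replicate hgi]
    exact hU.1.1 i (Multiset.mem_toFinset.mp hi)
  have hC0 : C ≠ 0 := by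
    intro h
    rw [h] at hkC
    have : crossNumber (0 : Multiset G) = 0 := by simp [crossNumber]
    rw [this] at hkC
    linarith [hkUs]
  obtain ⟨fC, hfC, hfCsum, hfC0⟩ :=
    ZSAux.exists_factorization C.card C rfl ⟨hCmem, hCsum⟩ hC0
  have ht1 : 1 ≤ fC.card := Multiset.card_pos.mpr hfC0
  have htle : (fC.card : ℚ) ≤ crossNumber C := by
    rw [← hfCsum]; exact ZSAux.card_le_crossNumber hLCN hfC
  have hts : fC.card + 1 < s := by
    have h1 : (fC.card : ℚ) < (s : ℚ) - 1 := by
      rw [hkC] at htle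
      linarith
    have : ((fC.card : ℚ) + 1) < (s : ℚ) := by linarith
    exact_mod_cast this
  -- the two lengths of B'
  have hlen1 : fC.card + 1 ∈ lengthSet G₀ B' := by
    refine ⟨U ::ₘ fC, by simp, ?_, ?_⟩
    · intro A hA
      rcases Multiset.mem_cons.mp hA with rfl | h
      · exact hU
      · exact hfC A h
    · rw [Multiset.sum_cons, hfCsum, hsplit]
  have hlen2 : s ∈ lengthSet G₀ B' := by
    refine ⟨U.toFinset.val.map (fun g => Multiset.replicate (addOrderOf g) g), by simp [hs, Finset.card], ?_, ?_⟩
    · intro A hA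
      obtain ⟨g, hg, rfl⟩ := Multiset.mem_map.mp hA
      exact ZSAux.isAtom_replicate_order (hU.1.1 g (Multiset.mem_toFinset.mp hg))
    · rw [hB', Finset.sum_eq_multiset_sum]
  have hB'0 : B' ≠ 0 := by
    intro h
    rw [hsplit] at h
    have hcc := congrArg Multiset.card h
    rw [Multiset.card_add, Multiset.card_zero] at hcc
    have := Multiset.card_pos.mpr hU.2.1
    omega
  obtain ⟨d, hd, hdle⟩ :=
    ZSAux.exists_gap s (fC.card + 1) s (Nat.sub_le _ _) hlen1 hlen2 hts
  have hdmem : d ∈ DeltaOf G₀ := by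
    rw [DeltaOf]
    simp only [Set.mem_iUnion]
    exact ⟨B', hB'0, hd⟩
  have hsle : s ≤ G₀.ncard := by
    have hsub : ↑U.toFinset ⊆ G₀ := fun g hg => hU.1.1 g (Multiset.mem_toFinset.mp hg)
    calc s = (↑U.toFinset : Set G).ncard := (Set.ncard_coe_finset _).symm
      _ ≤ G₀.ncard := Set.ncard_le_ncard hsub G₀.toFinite
  have hinf := Nat.sInf_le hdmem
  omega
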